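/- Let L be a Tonelli Lagrangian on ℝⁿ with fundamental solution A_t and Mañé critical value c_H[0], and let u be a weak KAM solution of H(x,Du(x)) = c_H[0]. Then there exists a constant λ₀>0, depending only on L and the Lipschitz constant of u, such that for every t>0, every x∈ℝⁿ, every maximum point y_{t,x} of φ^x_t(y) = u(y) − A_t(x,y) − c_H[0]·t, and every minimum point z_{t,x} of ψ^x_t(y) = u(y) + A_t(y,x) + c_H[0]·t, one has |y_{t,x} − x| ≤ λ₀·t and |z_{t,x} − x| ≤ λ₀·t. -/

import Mathlib

open Set MeasureTheory Filter Topology RealInnerProductSpace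

noncomputable section

variable {E : Type*} [NormedAddCommGroup E] [InnerProductSpace ℝ E] [CompleteSpace E]

/-- A superlinear function `θ : ℝ → ℝ`. -/
def IsSuperlinear (θ : ℝ → ℝ) : Prop := ∀ M : ℝ, ∃ r₀ : ℝ, ∀ r : ℝ, r₀ ≤ r → M * r ≤ θ r

/-- Tonelli Lagrangian: C², uniformly convex in `v`, with superlinear growth and
uniform bounds on first and second derivatives. -/
def IsTonelli (L : E → E → ℝ) : Prop :=
  ContDiff ℝ 2 (Function.uncurry L) ∧
  (∃ ν : ℝ → ℝ, (∀ r, 0 < ν r) ∧ (∀ r s : ℝ, r ≤ s → ν s ≤ ν r) ∧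
    ∀ x v w : E, ν ‖v‖ * ‖w‖ ^ 2 ≤ iteratedFDeriv ℝ 2 (fun v' => L x v') v ![w, w]) ∧
  (∃ θ₁ θ₂ : ℝ → ℝ, IsSuperlinear θ₁ ∧ IsSuperlinear θ₂ ∧ (∀ r, 0 ≤ θ₁ r) ∧ (∀ r, 0 ≤ θ₂ r) ∧
    ∃ c₀ : ℝ, 0 < c₀ ∧ ∀ x v : E, θ₁ ‖v‖ - c₀ ≤ L x v ∧ L x v ≤ θ₂ ‖v‖) ∧
  (∃ K : ℝ → ℝ, (∀ r s : ℝ, r ≤ s → K r ≤ K s) ∧ (∀ r, 0 ≤ K r) ∧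
    ∀ x v : E, ‖fderiv ℝ (Function.uncurry L) (x, v)‖ ≤ K ‖v‖ ∧
      ‖iteratedFDeriv ℝ 2 (Function.uncurry L) (x, v)‖ ≤ K ‖v‖)

/-- Admissible curves from `x` to `y` in time `t`. -/
def Admissible (t : ℝ) (x y : E) (ξ : ℝ → E) : Prop :=
  ContDiffOn ℝ 1 ξ (Icc 0 t) ∧ ξ 0 = x ∧ ξ t = y

/-- The action of a curve on `[0,t]`. -/
def LagAction (L : E → E → ℝ) (t : ℝ) (ξ : ℝ → E) : ℝ :=
  ∫ s in (0:ℝ)..t, L (ξ s) (derivWithin ξ (Icc 0 t) s)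

/-- `A` is the fundamental solution associated with `L`: for each `t > 0` and endpoints, the
minimum of the action is attained and equals `A t x y`. -/
def IsFundSol (L : E → E → ℝ) (A : ℝ → E → E → ℝ) : Prop :=
  ∀ t : ℝ, 0 < t → ∀ x y : E,
    (∃ ξ, Admissible t x y ξ ∧ A t x y = LagAction L t ξ) ∧
    (∀ ξ, Admissible t x y ξ → A t x y ≤ LagAction L t ξ)

/-- A minimizer for `A_t(x,y)`. -/
def IsMinimizer (L : E → E → ℝ) (t : ℝ) (x y : E) (ξ : ℝ → E) : Prop :=
  Admissible t x y ξ ∧ ∀ η, Admissible t x y η → LagAction L t ξ ≤ LagAction L t η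

/-- The Mañé critical value `c_H[0] = -inf { A_t(x,x)/t : t > 0, x }`. -/
def ManeCrit (A : ℝ → E → E → ℝ) : ℝ :=
  - sInf {r : ℝ | ∃ t : ℝ, 0 < t ∧ ∃ x : E, r = A t x x / t}

/-- Weak KAM solution for the value `c` : `u = T⁻ₜ u + c t` for all `t > 0`. -/
def IsWeakKAM (A : ℝ → E → E → ℝ) (c : ℝ) (u : E → ℝ) : Prop :=
  Continuous u ∧ ∀ t : ℝ, 0 < t → ∀ x : E,
    u x = sInf {r : ℝ | ∃ y : E, r = u y + A t y x + c * t}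

/-- The (Dini) superdifferential of `u` at `x`. -/
def SuperDiff (u : E → ℝ) (x : E) : Set E :=
  {p | ∀ ε : ℝ, 0 < ε → ∃ δ : ℝ, 0 < δ ∧
    ∀ y : E, ‖y - x‖ < δ → u y - u x - ⟪p, y - x⟫ ≤ ε * ‖y - x‖}

/-- The singular set of `u`: points where `D⁺u` is not a singleton. -/
def Sing (u : E → ℝ) : Set E :=
  {x | ∃ p ∈ SuperDiff u x, ∃ q ∈ SuperDiff u x, p ≠ q}

/-- A curve `γ` is `(u, L, c)`-calibrated on `[a,b]`. -/
def CalibOn (L : E → E → ℝ) (c : ℝ) (u : E → ℝ) (γ : ℝ → E) (a b : ℝ) : Prop :=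
  ContDiffOn ℝ 1 γ (Icc a b) ∧
  u (γ b) - u (γ a) = (∫ s in a..b, L (γ s) (derivWithin γ (Icc a b) s)) + c * (b - a)

/-- The cut locus of `u` : points where no calibrated curve can be extended beyond. -/
def Cut (L : E → E → ℝ) (c : ℝ) (u : E → ℝ) : Set E :=
  {x | ∀ γ : ℝ → E, ∀ a b : ℝ, a ≤ b → CalibOn L c u γ a b → x ∈ γ '' Icc a b → x = γ b}

/-- The set of reachable (limiting) gradients of `u` at `x`. -/
def ReachGrad (u : E → ℝ) (x : E) : Set E :=
  {p | ∃ xs : ℕ → E, ∃ ps : ℕ → E, (∀ k, xs k ≠ x ∧ HasGradientAt u (ps k) (xs k)) ∧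
    Tendsto xs atTop (𝓝 x) ∧ Tendsto ps atTop (𝓝 p)}

/-- `H` is the Legendre-Fenchel transform of `L`. -/
def IsLegendre (L H : E → E → ℝ) : Prop :=
  ∀ x p : E, IsLUB {r : ℝ | ∃ v : E, r = ⟪p, v⟫ - L x v} (H x p)

/-- The cone `S_λ(x,t')`. -/
def Cone (x : E) (lam t' : ℝ) : Set (ℝ × E) :=
  {q | 0 < q.1 ∧ q.1 < t' ∧ ‖q.2 - x‖ < lam * q.1}

/-- A generalized characteristic for a mechanical Hamiltonian, i.e. a Lipschitz arc on
`[0,∞)` with `ẋ(s) ∈ A(x(s)) D⁺v(x(s))` for a.e. `s ≥ 0`. -/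
def MechArc (Amap : E → E →L[ℝ] E) (v : E → ℝ) (X : ℝ → E) : Prop :=
  (∃ K : NNReal, LipschitzOnWith K X (Ici 0)) ∧
  ∀ᵐ s : ℝ, 0 < s → ∃ p ∈ SuperDiff v (X s), HasDerivAt X (Amap (X s) p) s

/-- Euclidean space `ℝⁿ`. -/
abbrev Eu (n : ℕ) := EuclideanSpace ℝ (Fin n)

/-- A backward calibrated curve on `(-∞,0]` ending at `x`. -/
def BackwardCalib (L : E → E → ℝ) (c : ℝ) (u : E → ℝ) (x : E) (γ : ℝ → E) : Prop :=
  γ 0 = x ∧ ContDiffOn ℝ 1 γ (Iic 0) ∧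
  ∀ a b : ℝ, a ≤ b → b ≤ 0 →
    u (γ b) - u (γ a) = (∫ s in a..b, L (γ s) (derivWithin γ (Iic 0) s)) + c * (b - a)


set_option linter.unusedSectionVars false

lemma aux_integral_derivWithin {t : ℝ} (ht : 0 < t) {ξ : ℝ → E}
    (hξ : ContDiffOn ℝ 1 ξ (Icc 0 t)) :
    ∫ s in (0:ℝ)..t, derivWithin ξ (Icc 0 t) s = ξ t - ξ 0 := by
  apply intervalIntegral.integral_eq_sub_of_hasDeriv_right_of_le ht.le hξ.continuousOn
  · intro s hs
    have hnb : Icc (0:ℝ) t ∈ 𝓝 s := Icc_mem_nhds hs.1 hs.2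
    have h1 : DifferentiableWithinAt ℝ ξ (Icc 0 t) s :=
      (hξ.differentiableOn one_ne_zero) s (Ioo_subset_Icc_self hs)
    have h2 : DifferentiableAt ℝ ξ s := h1.differentiableAt hnb
    rw [derivWithin_of_mem_nhds hnb]
    exact h2.hasDerivAt.hasDerivWithinAt
  · have hc : ContinuousOn (derivWithin ξ (Icc 0 t)) (Icc 0 t) :=
      hξ.continuousOn_derivWithin (uniqueDiffOn_Icc ht) le_rfl
    exact ContinuousOn.intervalIntegrable (by rwa [uIcc_of_le ht.le])

lemma aux_action_lower {L : E → E → ℝ} (hLc : Continuous (Function.uncurry L))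
    {M C t : ℝ} (hM : 0 ≤ M) (ht : 0 < t)
    (hpt : ∀ x v : E, M * ‖v‖ - C ≤ L x v)
    {x y : E} {ξ : ℝ → E} (hξ : Admissible t x y ξ) :
    M * ‖y - x‖ - C * t ≤ LagAction L t ξ := by
  set D := derivWithin ξ (Icc 0 t) with hDdef
  have hDc : ContinuousOn D (Icc 0 t) :=
    hξ.1.continuousOn_derivWithin (uniqueDiffOn_Icc ht) le_rfl
  have hIc : ContinuousOn (fun s => L (ξ s) (D s)) (Icc 0 t) :=
    hLc.comp_continuousOn (hξ.1.continuousOn.prodMk hDc)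
  have hInt1 : IntervalIntegrable (fun s => L (ξ s) (D s)) volume 0 t :=
    ContinuousOn.intervalIntegrable (by rwa [uIcc_of_le ht.le])
  have hIntN : IntervalIntegrable (fun s => M * ‖D s‖) volume 0 t := by
    apply ContinuousOn.intervalIntegrable
    rw [uIcc_of_le ht.le]
    exact continuousOn_const.mul hDc.norm
  have hFTC : ∫ s in (0:ℝ)..t, D s = y - x := by
    rw [hDdef, aux_integral_derivWithin ht hξ.1, hξ.2.2, hξ.2.1]
  have h1 : ‖y - x‖ ≤ ∫ s in (0:ℝ)..t, ‖D s‖ := by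
    rw [← hFTC]
    exact intervalIntegral.norm_integral_le_integral_norm ht.le
  have h2 : M * ‖y - x‖ ≤ ∫ s in (0:ℝ)..t, M * ‖D s‖ := by
    rw [intervalIntegral.integral_const_mul]
    exact mul_le_mul_of_nonneg_left h1 hM
  have h3 : (∫ s in (0:ℝ)..t, M * ‖D s‖) ≤
      ∫ s in (0:ℝ)..t, (L (ξ s) (D s) + C) := by
    apply intervalIntegral.integral_mono_on ht.le hIntN (hInt1.add intervalIntegrable_const)
    intro s _
    have := hpt (ξ s) (D s)
    linarith
  have h4 : (∫ s in (0:ℝ)..t, (L (ξ s) (D s) + C)) = LagAction L t ξ + C * t := by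
    rw [intervalIntegral.integral_add hInt1 intervalIntegrable_const,
      intervalIntegral.integral_const, LagAction]
    simp [smul_eq_mul]
    ring
  linarith

lemma aux_A_lower {L : E → E → ℝ} {A : ℝ → E → E → ℝ}
    (hLc : Continuous (Function.uncurry L)) (hA : IsFundSol L A)
    {M C : ℝ} (hM : 0 ≤ M) (hpt : ∀ x v : E, M * ‖v‖ - C ≤ L x v)
    {t : ℝ} (ht : 0 < t) (x y : E) :
    M * ‖y - x‖ - C * t ≤ A t x y := by
  obtain ⟨ξ, hadm, heq⟩ := (hA t ht x y).1
  rw [heq]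
  exact aux_action_lower hLc hM ht hpt hadm

lemma aux_A_upper {L : E → E → ℝ} {A : ℝ → E → E → ℝ}
    (hLc : Continuous (Function.uncurry L))
    {θ₂ : ℝ → ℝ} (hθ₂ : ∀ x v : E, L x v ≤ θ₂ ‖v‖)
    (hA : IsFundSol L A) {t : ℝ} (ht : 0 < t) (x y : E) :
    A t x y ≤ θ₂ (‖y - x‖ / t) * t := by
  set w := t⁻¹ • (y - x) with hw
  set ξ : ℝ → E := fun s => x + s • w with hξdef
  have hξt : ξ t = y := by
    simp only [hξdef, hw, smul_smul, mul_inv_cancel₀ ht.ne', one_smul]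
    abel
  have hadm : Admissible t x y ξ := by
    refine ⟨(contDiff_const.add (contDiff_id.smul contDiff_const)).contDiffOn, by
      simp [hξdef], hξt⟩
  have hder : ∀ s ∈ Icc (0:ℝ) t, derivWithin ξ (Icc 0 t) s = w := by
    intro s hs
    have h1 : HasDerivAt ξ w s := by
      have := ((hasDerivAt_id' s).smul_const w).const_add x
      rw [one_smul] at this
      exact this
    exact h1.hasDerivWithinAt.derivWithin (uniqueDiffOn_Icc ht s hs)
  have hwnorm : ‖w‖ = ‖y - x‖ / t := by
    rw [hw, norm_smul, norm_inv, Real.norm_eq_abs, abs_of_pos ht, div_eq_inv_mul]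
  have hcont : Continuous fun s : ℝ => L (ξ s) w :=
    hLc.comp ((continuous_const.add (continuous_id.smul continuous_const)).prodMk
      continuous_const)
  have hact : LagAction L t ξ = ∫ s in (0:ℝ)..t, L (ξ s) w := by
    apply intervalIntegral.integral_congr
    intro s hs
    rw [uIcc_of_le ht.le] at hs
    simp only [hder s hs]
  have hle : LagAction L t ξ ≤ θ₂ ‖w‖ * t := by
    rw [hact]
    calc (∫ s in (0:ℝ)..t, L (ξ s) w) ≤ ∫ _s in (0:ℝ)..t, θ₂ ‖w‖ := by
          apply intervalIntegral.integral_mono_on ht.le (hcont.intervalIntegrable 0 t)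
            intervalIntegrable_const
          intro s _
          exact hθ₂ (ξ s) w
      _ = θ₂ ‖w‖ * t := by rw [intervalIntegral.integral_const]; simp [smul_eq_mul]; ring
  calc A t x y ≤ LagAction L t ξ := (hA t ht x y).2 ξ hadm
    _ ≤ θ₂ ‖w‖ * t := hle
    _ = θ₂ (‖y - x‖ / t) * t := by rw [hwnorm]



theorem statement7 {n : ℕ} (L : Eu n → Eu n → ℝ) (A : ℝ → Eu n → Eu n → ℝ)
    (hL : IsTonelli L) (hA : IsFundSol L A)
    (u : Eu n → ℝ) (hu : IsWeakKAM A (ManeCrit A) u) :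
    ∃ lam₀ : ℝ, 0 < lam₀ ∧ ∀ t : ℝ, 0 < t → ∀ x : Eu n,
      (∀ ystar : Eu n,
        (∀ y : Eu n, u y - A t x y - ManeCrit A * t ≤ u ystar - A t x ystar - ManeCrit A * t) →
        ‖ystar - x‖ ≤ lam₀ * t) ∧
      (∀ zstar : Eu n,
        (∀ y : Eu n, u zstar + A t zstar x + ManeCrit A * t ≤ u y + A t y x + ManeCrit A * t) →
        ‖zstar - x‖ ≤ lam₀ * t) := by
  obtain ⟨hC2, -, ⟨θ₁, θ₂, hsup₁, -, hθ₁0, hθ₂0, c₀, hc₀, hbound⟩, -⟩ := hL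
  have hLc : Continuous (Function.uncurry L) := hC2.continuous
  have hθ₂' : ∀ x v : Eu n, L x v ≤ θ₂ ‖v‖ := fun x v => (hbound x v).2
  set c := ManeCrit A with hcdef
  set Lip := θ₂ 1 + |c| with hLipdef
  have hLip0 : 0 ≤ Lip := add_nonneg (hθ₂0 1) (abs_nonneg c)
  obtain ⟨r₀, hr₀⟩ := hsup₁ (Lip + 1)
  set r₁ := max r₀ 0 with hr₁def
  have hr₁0 : 0 ≤ r₁ := le_max_right r₀ 0
  -- pointwise lower bounds on L
  have hpt : ∀ x v : Eu n, (Lip + 1) * ‖v‖ - (c₀ + (Lip + 1) * r₁) ≤ L x v := by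
    intro x v
    have hb1 := (hbound x v).1
    have h01 := hθ₁0 ‖v‖
    have hM0 : (0:ℝ) ≤ Lip + 1 := by linarith
    have hr1nn : 0 ≤ (Lip + 1) * r₁ := mul_nonneg hM0 hr₁0
    rcases le_or_gt r₀ ‖v‖ with h | h
    · have := hr₀ ‖v‖ h
      linarith
    · have hv1 : ‖v‖ ≤ r₁ := le_trans h.le (le_max_left r₀ 0)
      have : (Lip + 1) * ‖v‖ ≤ (Lip + 1) * r₁ := mul_le_mul_of_nonneg_left hv1 hM0
      linarith
  have hpt0 : ∀ x v : Eu n, (0:ℝ) * ‖v‖ - c₀ ≤ L x v := by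
    intro x v
    have hb1 := (hbound x v).1
    have h01 := hθ₁0 ‖v‖
    linarith
  -- upper bound for zero-displacement
  have hup : ∀ t : ℝ, 0 < t → ∀ x : Eu n, A t x x ≤ θ₂ 0 * t := by
    intro t ht x
    have := aux_A_upper hLc hθ₂' hA ht x x
    simpa using this
  -- upper bound at unit speed
  have hup1 : ∀ x y : Eu n, x ≠ y → A ‖x - y‖ y x ≤ θ₂ 1 * ‖x - y‖ := by
    intro x y hne
    have hpos : 0 < ‖x - y‖ := norm_sub_pos_iff.2 hne
    have := aux_A_upper hLc hθ₂' hA hpos y x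
    rwa [div_self hpos.ne'] at this
  have hsInf := hu.2
  have hstep : ∀ x : Eu n,
      (∀ t : ℝ, 0 < t → BddBelow {r : ℝ | ∃ y, r = u y + A t y x + c * t}) →
      ∀ (y : Eu n) (t : ℝ), 0 < t → u x ≤ u y + A t y x + c * t := by
    intro x hb y t ht
    rw [hsInf t ht x]
    exact csInf_le (hb t ht) ⟨y, rfl⟩
  have hlin : ∀ x : Eu n, (∀ (y : Eu n) (t : ℝ), 0 < t → u x ≤ u y + A t y x + c * t) →
      ∀ y : Eu n, u x - Lip * ‖y - x‖ ≤ u y := by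
    intro x hx y
    rcases eq_or_ne x y with rfl | hne
    · simp
    · have hpos : 0 < ‖x - y‖ := norm_sub_pos_iff.2 hne
      have h1 := hx y ‖x - y‖ hpos
      have h2 := hup1 x y hne
      have h3 : c * ‖x - y‖ ≤ |c| * ‖x - y‖ :=
        mul_le_mul_of_nonneg_right (le_abs_self c) (norm_nonneg _)
      have h4 : ‖y - x‖ = ‖x - y‖ := norm_sub_rev y x
      have h5 : Lip * ‖x - y‖ = θ₂ 1 * ‖x - y‖ + |c| * ‖x - y‖ := by rw [hLipdef]; ring
      rw [h4]
      linarith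
  have hkey : ∀ x y : Eu n, u x ≤ u y + Lip * ‖x - y‖ := by
    by_cases hex : ∃ xb : Eu n, ∀ t : ℝ, 0 < t →
        BddBelow {r : ℝ | ∃ y, r = u y + A t y xb + c * t}
    · obtain ⟨xb, hb⟩ := hex
      have hlow : ∀ y : Eu n, u xb - Lip * ‖y - xb‖ ≤ u y := hlin xb (hstep xb hb)
      have hball : ∀ (x : Eu n) (t : ℝ), 0 < t →
          BddBelow {r : ℝ | ∃ y, r = u y + A t y x + c * t} := by
        intro x t ht
        refine ⟨u xb - Lip * ‖x - xb‖ - (c₀ + (Lip + 1) * r₁) * t + c * t, ?_⟩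
        rintro r ⟨y, rfl⟩
        have h1 : (Lip + 1) * ‖x - y‖ - (c₀ + (Lip + 1) * r₁) * t ≤ A t y x :=
          aux_A_lower hLc hA (by linarith) hpt ht y x
        have h2 := hlow y
        have h3 := dist_triangle y x xb
        rw [dist_eq_norm, dist_eq_norm, dist_eq_norm] at h3
        have h6 : Lip * ‖y - xb‖ ≤ Lip * ‖y - x‖ + Lip * ‖x - xb‖ := by
          have := mul_le_mul_of_nonneg_left h3 hLip0
          rw [mul_add] at this
          exact this
        have h4 : ‖x - y‖ = ‖y - x‖ := norm_sub_rev x y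
        have h7 : (Lip + 1) * ‖x - y‖ = Lip * ‖y - x‖ + ‖y - x‖ := by rw [h4]; ring
        have h8 : 0 ≤ ‖y - x‖ := norm_nonneg _
        linarith
      intro x y
      rcases eq_or_ne x y with rfl | hne
      · simp
      · have hpos : 0 < ‖x - y‖ := norm_sub_pos_iff.2 hne
        have h1 := hstep x (hball x) y ‖x - y‖ hpos
        have h2 := hup1 x y hne
        have h3 : c * ‖x - y‖ ≤ |c| * ‖x - y‖ :=
          mul_le_mul_of_nonneg_right (le_abs_self c) (norm_nonneg _)
        have h5 : Lip * ‖x - y‖ = θ₂ 1 * ‖x - y‖ + |c| * ‖x - y‖ := by rw [hLipdef]; ring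
        linarith
    · exfalso
      push_neg at hex
      have hzero : ∀ x : Eu n, u x = 0 := by
        intro x
        obtain ⟨t, ht, hnb⟩ := hex x
        rw [hsInf t ht x, Real.sInf_of_not_bddBelow hnb]
      obtain ⟨t, ht, hnb⟩ := hex 0
      apply hnb
      refine ⟨(c - c₀) * t, ?_⟩
      rintro r ⟨y, rfl⟩
      have h1 := aux_A_lower hLc hA le_rfl hpt0 ht y (0 : Eu n)
      rw [hzero y]
      simp only [zero_mul, zero_sub] at h1
      linarith
  refine ⟨c₀ + (Lip + 1) * r₁ + θ₂ 0 + 1, ?_, ?_⟩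
  · have h1 : 0 ≤ (Lip + 1) * r₁ := mul_nonneg (by linarith) hr₁0
    have h2 := hθ₂0 0
    linarith
  · intro t ht x
    constructor
    · intro ys hmax
      have h0 := hmax x
      have hupx := hup t ht x
      have hlow : (Lip + 1) * ‖ys - x‖ - (c₀ + (Lip + 1) * r₁) * t ≤ A t x ys :=
        aux_A_lower hLc hA (by linarith) hpt ht x ys
      have hK : u ys ≤ u x + Lip * ‖ys - x‖ := hkey ys x
      have e1 : (Lip + 1) * ‖ys - x‖ = Lip * ‖ys - x‖ + ‖ys - x‖ := by ring
      linarith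
    · intro zs hmin
      have h0 := hmin x
      have hupx := hup t ht x
      have hlow : (Lip + 1) * ‖x - zs‖ - (c₀ + (Lip + 1) * r₁) * t ≤ A t zs x :=
        aux_A_lower hLc hA (by linarith) hpt ht zs x
      have hK : u x ≤ u zs + Lip * ‖x - zs‖ := hkey x zs
      rw [norm_sub_rev]
      have e1 : (Lip + 1) * ‖x - zs‖ = Lip * ‖x - zs‖ + ‖x - zs‖ := by ring
      linarith

end
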